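/- If B ≥ 4 is an integer and ρ ≥ 1.6 is real, then 1 − B·e^{−(B+1)ρ/2} + (B(B−1)/2)·e^{−2(B+1)ρ/3} ≤ 1 − (B+1)·e^{−(B+2)ρ/2}; equivalently, (B+1)·e^{−(B+2)ρ/2} + (B(B−1)/2)·e^{−2(B+1)ρ/3} ≤ B·e^{−(B+1)ρ/2}. -/

import Mathlib

/-- exp(4/5) ≥ 11/5 -/
lemma stmt17_exp45 : (11/5 : ℝ) ≤ Real.exp (4/5) := by
  have h : (1 + 1/40 : ℝ) ≤ Real.exp (1/40) := by
    have := Real.add_one_le_exp (1/40 : ℝ); linarith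
  have h2 : ((1 + 1/40 : ℝ))^(32:ℕ) ≤ (Real.exp (1/40))^(32:ℕ) :=
    pow_le_pow_left₀ (by norm_num) h 32
  have h3 : (Real.exp (1/40))^(32:ℕ) = Real.exp (4/5) := by
    rw [← Real.exp_nat_mul]; norm_num
  have h4 : (11/5 : ℝ) ≤ ((1 + 1/40 : ℝ))^(32:ℕ) := by norm_num
  linarith

/-- exp(4/3) ≥ 369/100 -/
lemma stmt17_exp43 : (369/100 : ℝ) ≤ Real.exp (4/3) := by
  have h : (1 + 1/24 : ℝ) ≤ Real.exp (1/24) := by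
    have := Real.add_one_le_exp (1/24 : ℝ); linarith
  have h2 : ((1 + 1/24 : ℝ))^(32:ℕ) ≤ (Real.exp (1/24))^(32:ℕ) :=
    pow_le_pow_left₀ (by norm_num) h 32
  have h3 : (Real.exp (1/24))^(32:ℕ) = Real.exp (4/3) := by
    rw [← Real.exp_nat_mul]; norm_num
  have h4 : (369/100 : ℝ) ≤ ((1 + 1/24 : ℝ))^(32:ℕ) := by norm_num
  linarith

/-- if `B ≥ 4` is an integer and `ρ ≥ 1.6` is real, then
`1 - B e^{-(B+1)ρ/2} + (B(B-1)/2) e^{-2(B+1)ρ/3} ≤ 1 - (B+1) e^{-(B+2)ρ/2}`;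
equivalently, `(B+1) e^{-(B+2)ρ/2} + (B(B-1)/2) e^{-2(B+1)ρ/3} ≤ B e^{-(B+1)ρ/2}`. -/
theorem stmt17 (B : ℕ) (hB : 4 ≤ B) (ρ : ℝ) (hρ : 1.6 ≤ ρ) :
    (1 - (B : ℝ) * Real.exp (-(((B : ℝ) + 1) * ρ / 2)) +
        ((B : ℝ) * ((B : ℝ) - 1) / 2) * Real.exp (-(2 * ((B : ℝ) + 1) * ρ / 3))
      ≤ 1 - ((B : ℝ) + 1) * Real.exp (-(((B : ℝ) + 2) * ρ / 2))) ∧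
    (((B : ℝ) + 1) * Real.exp (-(((B : ℝ) + 2) * ρ / 2)) +
        ((B : ℝ) * ((B : ℝ) - 1) / 2) * Real.exp (-(2 * ((B : ℝ) + 1) * ρ / 3))
      ≤ (B : ℝ) * Real.exp (-(((B : ℝ) + 1) * ρ / 2))) := by
  have hb : (4:ℝ) ≤ (B:ℝ) := by exact_mod_cast hB
  set b := (B:ℝ) with hbdef
  have hρ' : (8/5 : ℝ) ≤ ρ := by norm_num at hρ ⊢; linarith
  have hE : (0:ℝ) < Real.exp (-((b+1)*ρ/2)) := Real.exp_pos _
  have e1 : Real.exp (-((b+2)*ρ/2)) = Real.exp (-((b+1)*ρ/2)) * Real.exp (-(ρ/2)) := by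
    rw [← Real.exp_add]; ring_nf
  have e2 : Real.exp (-(2*(b+1)*ρ/3)) = Real.exp (-((b+1)*ρ/2)) * Real.exp (-((b+1)*ρ/6)) := by
    rw [← Real.exp_add]; ring_nf
  -- Step A : exp(-(ρ/2)) ≤ 5/11
  have hA : Real.exp (-(ρ/2)) ≤ 5/11 := by
    have h1 : Real.exp (-(ρ/2)) ≤ Real.exp (-(4/5 : ℝ)) :=
      Real.exp_le_exp.mpr (by linarith)
    have h2 : Real.exp (-(4/5 : ℝ)) = (Real.exp (4/5))⁻¹ := Real.exp_neg _
    have h3 : (Real.exp (4/5))⁻¹ ≤ ((11:ℝ)/5)⁻¹ :=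
      inv_anti₀ (by norm_num) stmt17_exp45
    have h4 : ((11:ℝ)/5)⁻¹ = 5/11 := by norm_num
    rw [h2] at h1; linarith
  -- Step B : exp(-((b+1)ρ/6)) ≤ (100/369) * (225/(2b+7)^2)
  have hB2 : Real.exp (-((b+1)*ρ/6)) ≤ (100/369) * (225/(2*b+7)^2) := by
    have h1 : Real.exp (-((b+1)*ρ/6)) ≤ Real.exp (-(4*(b+1)/15)) := by
      apply Real.exp_le_exp.mpr; nlinarith
    have h2 : Real.exp (-(4*(b+1)/15)) =
        Real.exp (-(4/3 : ℝ)) * Real.exp (-(4*(b-4)/15)) := by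
      rw [← Real.exp_add]; ring_nf
    have h3 : Real.exp (-(4/3 : ℝ)) ≤ 100/369 := by
      rw [Real.exp_neg]
      have h3' : (Real.exp (4/3))⁻¹ ≤ ((369:ℝ)/100)⁻¹ :=
        inv_anti₀ (by norm_num) stmt17_exp43
      have : ((369:ℝ)/100)⁻¹ = 100/369 := by norm_num
      linarith
    have h4 : Real.exp (-(4*(b-4)/15)) ≤ 225/(2*b+7)^2 := by
      have hq : (1 + 2*(b-4)/15 : ℝ) ≤ Real.exp (2*(b-4)/15) := by
        have := Real.add_one_le_exp (2*(b-4)/15 : ℝ); linarith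
      have hbase : (0:ℝ) < 1 + 2*(b-4)/15 := by linarith
      have hsq : ((1 + 2*(b-4)/15 : ℝ))^2 ≤ (Real.exp (2*(b-4)/15))^2 :=
        pow_le_pow_left₀ hbase.le hq 2
      have hexp2 : (Real.exp (2*(b-4)/15))^2 = Real.exp (4*(b-4)/15) := by
        rw [sq, ← Real.exp_add]; ring_nf
      have hgt : ((1 + 2*(b-4)/15 : ℝ))^2 ≤ Real.exp (4*(b-4)/15) := by
        rw [← hexp2]; exact hsq
      have hposE : (0:ℝ) < ((1 + 2*(b-4)/15 : ℝ))^2 := by positivity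
      have hinv : (Real.exp (4*(b-4)/15))⁻¹ ≤ (((1 + 2*(b-4)/15 : ℝ))^2)⁻¹ :=
        inv_anti₀ hposE hgt
      have heq : (((1 + 2*(b-4)/15 : ℝ))^2)⁻¹ = 225/(2*b+7)^2 := by
        have h7 : (2*b+7 : ℝ) ≠ 0 := by positivity
        have h8 : (1 + 2*(b-4)/15 : ℝ) = (2*b+7)/15 := by ring
        rw [h8]; field_simp; norm_num
      rw [Real.exp_neg]; linarith
    calc Real.exp (-((b+1)*ρ/6)) ≤ Real.exp (-(4*(b+1)/15)) := h1
      _ = Real.exp (-(4/3 : ℝ)) * Real.exp (-(4*(b-4)/15)) := h2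
      _ ≤ (100/369) * (225/(2*b+7)^2) :=
          mul_le_mul h3 h4 (Real.exp_pos _).le (by norm_num)
  -- polynomial inequality
  have h7 : (0:ℝ) < (2*b+7)^2 := by positivity
  have hC : (0:ℝ) ≤ b*(b-1)/2 := by nlinarith
  have hpoly : (b+1)*(5/11) + (b*(b-1)/2)*((100/369)*(225/(2*b+7)^2)) ≤ b := by
    rw [show (b+1)*(5/11) + (b*(b-1)/2)*((100/369)*(225/(2*b+7)^2))
        = ((b+1)*(5/11)*(2*b+7)^2 + (b*(b-1)/2)*((100/369)*225))/(2*b+7)^2 by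
          field_simp]
    rw [div_le_iff₀ h7]
    nlinarith [sq_nonneg (b-4), mul_nonneg (sq_nonneg (b-4)) (by linarith : (0:ℝ) ≤ b-4)]
  -- combine
  have main : (b+1)*Real.exp (-(ρ/2)) + (b*(b-1)/2)*Real.exp (-((b+1)*ρ/6)) ≤ b := by
    have t1 : (b+1)*Real.exp (-(ρ/2)) ≤ (b+1)*(5/11) :=
      mul_le_mul_of_nonneg_left hA (by linarith)
    have t2 : (b*(b-1)/2)*Real.exp (-((b+1)*ρ/6))
        ≤ (b*(b-1)/2)*((100/369)*(225/(2*b+7)^2)) :=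
      mul_le_mul_of_nonneg_left hB2 hC
    linarith
  have S2 : (b+1)*Real.exp (-((b+2)*ρ/2)) + (b*(b-1)/2)*Real.exp (-(2*(b+1)*ρ/3))
      ≤ b*Real.exp (-((b+1)*ρ/2)) := by
    rw [e1, e2]
    have hm := mul_le_mul_of_nonneg_right main hE.le
    nlinarith [hm]
  exact ⟨by linarith, S2⟩
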